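/- For any LE-ALC ABox A, the tableaux completion Ā of A contains a clash if and only if A is inconsistent. -/

import Mathlib

/-!
Common formal infrastructure for the description logic LE-ALC:
syntax of concepts, individual names, ABox terms, the tableaux expansion
rules and completion, and the polarity-based (enriched formal context)
semantics.
-/

namespace LEALC

/-- LE-ALC concepts: `C ::= D | C₁ ∧ C₂ | C₁ ∨ C₂ | [R_□]C | ⟨R_◇⟩C`. -/
inductive Cpt : Type
  | atom : ℕ → Cpt
  | meet : Cpt → Cpt → Cpt
  | join : Cpt → Cpt → Cpt
  | box  : Cpt → Cpt
  | dia  : Cpt → Cpt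
  deriving DecidableEq

/-- Object individual names: ordinary names from `OBJ`, classifying objects
`a_C`, and the prefixed names `◇b`, `◆b` generated by the tableaux. -/
inductive ObName : Type
  | base : ℕ → ObName
  | cls  : Cpt → ObName
  | dia  : ObName → ObName
  | bdia : ObName → ObName
  deriving DecidableEq

/-- Feature individual names: ordinary names from `FEAT`, classifying features
`x_C`, and the prefixed names `□y`, `■y` generated by the tableaux. -/
inductive FtName : Type
  | base : ℕ → FtName
  | cls  : Cpt → FtName
  | box  : FtName → FtName
  | bbox : FtName → FtName
  deriving DecidableEq

/-- `◇b`, with the identification `◇a_C = a_{◇C}`. -/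
def ObName.diaS : ObName → ObName
  | .cls C => .cls (.dia C)
  | b => .dia b

/-- `□y`, with the identification `□x_C = x_{□C}`. -/
def FtName.boxS : FtName → FtName
  | .cls C => .cls (.box C)
  | y => .box y

/-- Positive (unnegated) ABox terms:
`a I x`, `a R_□ x`, `x R_◇ a`, `a : C`, `x :: C`. -/
inductive PTerm : Type
  | rI   : ObName → FtName → PTerm
  | rbox : ObName → FtName → PTerm
  | rdia : FtName → ObName → PTerm
  | mem  : ObName → Cpt → PTerm
  | fmem : FtName → Cpt → PTerm
  deriving DecidableEq

/-- ABox terms: a positive term or its negation. -/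
inductive Term : Type
  | pos : PTerm → Term
  | neg : PTerm → Term
  deriving DecidableEq

/-- The relational terms are `a I x`, `a R_□ x` and `x R_◇ a`. -/
def PTerm.IsRelational : PTerm → Prop
  | .rI _ _ => True
  | .rbox _ _ => True
  | .rdia _ _ => True
  | .mem _ _ => False
  | .fmem _ _ => False

/-- Subformulas (subconcepts) of a concept. -/
def Cpt.subs : Cpt → Finset Cpt
  | .atom n => {Cpt.atom n}
  | .meet C₁ C₂ => insert (Cpt.meet C₁ C₂) (C₁.subs ∪ C₂.subs)
  | .join C₁ C₂ => insert (Cpt.join C₁ C₂) (C₁.subs ∪ C₂.subs)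
  | .box C => insert (Cpt.box C) C.subs
  | .dia C => insert (Cpt.dia C) C.subs

/-- The concepts occurring in a term (subformulas of the concept of a
(possibly negated) membership assertion). -/
def Term.cpts : Term → Finset Cpt
  | .pos (.mem _ C) => C.subs
  | .pos (.fmem _ C) => C.subs
  | .neg (.mem _ C) => C.subs
  | .neg (.fmem _ C) => C.subs
  | _ => ∅

/-- The concept `C` occurs in the set of terms `A`. -/
def Occurs (C : Cpt) (A : Set Term) : Prop := ∃ t ∈ A, C ∈ t.cpts

def PTerm.objs : PTerm → List ObName
  | .rI b _ => [b]
  | .rbox b _ => [b]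
  | .rdia _ b => [b]
  | .mem b _ => [b]
  | .fmem _ _ => []

def PTerm.feats : PTerm → List FtName
  | .rI _ y => [y]
  | .rbox _ y => [y]
  | .rdia y _ => [y]
  | .mem _ _ => []
  | .fmem y _ => [y]

def Term.objs : Term → List ObName
  | .pos t => t.objs
  | .neg t => t.objs

def Term.feats : Term → List FtName
  | .pos t => t.feats
  | .neg t => t.feats

/-- The object name `b` occurs in the set of terms `S`. -/
def ObOccurs (b : ObName) (S : Set Term) : Prop := ∃ t ∈ S, b ∈ t.objs

/-- The feature name `y` occurs in the set of terms `S`. -/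
def FtOccurs (y : FtName) (S : Set Term) : Prop := ∃ t ∈ S, y ∈ t.feats

def ObName.IsBase (b : ObName) : Prop := ∃ n, b = ObName.base n
def FtName.IsBase (y : FtName) : Prop := ∃ n, y = FtName.base n

/-- A term all of whose individual names are ordinary (non-generated) names. -/
def Term.Plain (t : Term) : Prop :=
  (∀ b ∈ t.objs, b.IsBase) ∧ (∀ y ∈ t.feats, y.IsBase)

/-- An ABox is a set of terms over the ordinary individual names `OBJ`/`FEAT`
(the generated names `a_C`, `x_C`, `◇b`, `◆b`, `□y`, `■y` are fresh). -/
def ABoxWF (A : Set Term) : Prop := ∀ t ∈ A, t.Plain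

def Cpt.csize : Cpt → ℕ
  | .atom _ => 1
  | .meet C₁ C₂ => C₁.csize + C₂.csize + 1
  | .join C₁ C₂ => C₁.csize + C₂.csize + 1
  | .box C => C.csize + 1
  | .dia C => C.csize + 1

def PTerm.psize : PTerm → ℕ
  | .rI _ _ => 1
  | .rbox _ _ => 1
  | .rdia _ _ => 1
  | .mem _ C => C.csize + 1
  | .fmem _ C => C.csize + 1

def Term.tsize : Term → ℕ
  | .pos t => t.psize + 1
  | .neg t => t.psize + 2

/-- The size `|A|` of an ABox. -/
def aboxSize (A : Finset Term) : ℕ := A.sum Term.tsize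

/-- Box-depth of a concept. -/
def Cpt.bd : Cpt → ℕ
  | .atom _ => 0
  | .meet C₁ C₂ => max C₁.bd C₂.bd
  | .join C₁ C₂ => max C₁.bd C₂.bd
  | .box C => C.bd + 1
  | .dia C => C.bd

/-- Diamond-depth of a concept. -/
def Cpt.dd : Cpt → ℕ
  | .atom _ => 0
  | .meet C₁ C₂ => max C₁.dd C₂.dd
  | .join C₁ C₂ => max C₁.dd C₂.dd
  | .box C => C.dd
  | .dia C => C.dd + 1

/-- Box-depth of an object name (names in the input ABox have depth 0,
prefixing changes the depth, classifying names inherit depths from their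
concept). -/
def ObName.bd : ObName → ℤ
  | .base _ => 0
  | .cls C => -(C.bd : ℤ)
  | .dia b => b.bd
  | .bdia b => b.bd + 1

/-- Diamond-depth of an object name. -/
def ObName.dd : ObName → ℤ
  | .base _ => 0
  | .cls C => -(C.dd : ℤ)
  | .dia b => b.dd + 1
  | .bdia b => b.dd

/-- Box-depth of a feature name. -/
def FtName.bd : FtName → ℤ
  | .base _ => 0
  | .cls C => -(C.bd : ℤ)
  | .box y => y.bd + 1
  | .bbox y => y.bd

/-- Diamond-depth of a feature name. -/
def FtName.dd : FtName → ℤ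
  | .base _ => 0
  | .cls C => -(C.dd : ℤ)
  | .box y => y.dd
  | .bbox y => y.dd + 1

/-- All concepts occurring in an ABox. -/
def aboxCpts (A : Finset Term) : Finset Cpt := A.biUnion Term.cpts

/-- `□_D(A)`: maximal box-depth of a concept occurring in `A`. -/
def aboxBd (A : Finset Term) : ℕ := (aboxCpts A).sup Cpt.bd

/-- `◇_D(A)`: maximal diamond-depth of a concept occurring in `A`. -/
def aboxDd (A : Finset Term) : ℕ := (aboxCpts A).sup Cpt.dd

/-- One-step derivability: `Deriv E A S t` holds iff the term `t` can be
added by applying one of the LE-ALC tableaux expansion rules (or the extra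
rule `E`) to the current set of terms `S`, `A` being the input ABox (used
for the side conditions of the creation and inverse rules). -/
inductive Deriv (E : Term → Term → Prop) (A S : Set Term) : Term → Prop
  /-- creation rule -/
  | create_a {C : Cpt} : Occurs C A → Deriv E A S (.pos (.mem (.cls C) C))
  | create_x {C : Cpt} : Occurs C A → Deriv E A S (.pos (.fmem (.cls C) C))
  /-- basic rule -/
  | basic {b y C} : Term.pos (.mem b C) ∈ S → Term.pos (.fmem y C) ∈ S →
      Deriv E A S (.pos (.rI b y))
  /-- rules for the logical connectives -/
  | andA_l {b C₁ C₂} : Term.pos (.mem b (.meet C₁ C₂)) ∈ S → Deriv E A S (.pos (.mem b C₁))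
  | andA_r {b C₁ C₂} : Term.pos (.mem b (.meet C₁ C₂)) ∈ S → Deriv E A S (.pos (.mem b C₂))
  | orX_l {y C₁ C₂} : Term.pos (.fmem y (.join C₁ C₂)) ∈ S → Deriv E A S (.pos (.fmem y C₁))
  | orX_r {y C₁ C₂} : Term.pos (.fmem y (.join C₁ C₂)) ∈ S → Deriv E A S (.pos (.fmem y C₂))
  | boxR {b y C} : Term.pos (.mem b (.box C)) ∈ S → Term.pos (.fmem y C) ∈ S →
      Deriv E A S (.pos (.rbox b y))
  | diaR {b y C} : Term.pos (.fmem y (.dia C)) ∈ S → Term.pos (.mem b C) ∈ S →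
      Deriv E A S (.pos (.rdia y b))
  /-- inverse rules for the connectives -/
  | andA_inv {b C₁ C₂} : Term.pos (.mem b C₁) ∈ S → Term.pos (.mem b C₂) ∈ S →
      Occurs (.meet C₁ C₂) A → Deriv E A S (.pos (.mem b (.meet C₁ C₂)))
  | orX_inv {y C₁ C₂} : Term.pos (.fmem y C₁) ∈ S → Term.pos (.fmem y C₂) ∈ S →
      Occurs (.join C₁ C₂) A → Deriv E A S (.pos (.fmem y (.join C₁ C₂)))
  /-- adjunction rules -/
  | adj_box_l {b y} : Term.pos (.rbox b y) ∈ S → Deriv E A S (.pos (.rI (.bdia b) y))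
  | adj_box_r {b y} : Term.pos (.rbox b y) ∈ S → Deriv E A S (.pos (.rI b (FtName.boxS y)))
  | adj_dia_l {b y} : Term.pos (.rdia y b) ∈ S → Deriv E A S (.pos (.rI (ObName.diaS b) y))
  | adj_dia_r {b y} : Term.pos (.rdia y b) ∈ S → Deriv E A S (.pos (.rI b (.bbox y)))
  /-- I-compatibility rules -/
  | icomp_box {b y} : Term.pos (.rI b (FtName.boxS y)) ∈ S → Deriv E A S (.pos (.rbox b y))
  | icomp_bbox {b y} : Term.pos (.rI b (.bbox y)) ∈ S → Deriv E A S (.pos (.rdia y b))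
  | icomp_dia {b y} : Term.pos (.rI (ObName.diaS b) y) ∈ S → Deriv E A S (.pos (.rdia y b))
  | icomp_bdia {b y} : Term.pos (.rI (.bdia b) y) ∈ S → Deriv E A S (.pos (.rbox b y))
  /-- basic rules for negative assertions -/
  | neg_b {b C} : Term.neg (.mem b C) ∈ S → Deriv E A S (.neg (.rI b (.cls C)))
  | neg_x {y C} : Term.neg (.fmem y C) ∈ S → Deriv E A S (.neg (.rI (.cls C) y))
  /-- appending rules -/
  | app_x {b C} : Term.pos (.rI b (.cls C)) ∈ S → Deriv E A S (.pos (.mem b C))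
  | app_a {y C} : Term.pos (.rI (.cls C) y) ∈ S → Deriv E A S (.pos (.fmem y C))
  /-- an additional expansion rule `E` -/
  | extra {t t'} : E t t' → t ∈ S → Deriv E A S t'

/-- `S` contains `A` and is closed under the expansion rules. -/
def RuleClosed (E : Term → Term → Prop) (A S : Set Term) : Prop :=
  A ⊆ S ∧ ∀ t, Deriv E A S t → t ∈ S

/-- The tableaux completion `Ā` of the ABox `A` (w.r.t. the LE-ALC expansion
rules together with the extra rule `E`): the least set of terms containing
`A` and closed under the rules. -/
def Compl (E : Term → Term → Prop) (A : Set Term) : Set Term :=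
  {t | ∀ S : Set Term, RuleClosed E A S → t ∈ S}

/-- No extra expansion rule: the plain LE-ALC tableaux algorithm. -/
def noExt : Term → Term → Prop := fun _ _ => False

/-- One expansion step of the tableaux algorithm: a rule is applied to the
current set `B` and adds a new term. -/
def Step (E : Term → Term → Prop) (A B B' : Set Term) : Prop :=
  ∃ t, Deriv E A B t ∧ t ∉ B ∧ B' = insert t B

/-- A clash: some relational term occurs together with its negation. -/
def HasClash (S : Set Term) : Prop :=
  ∃ β : PTerm, β.IsRelational ∧ Term.pos β ∈ S ∧ Term.neg β ∈ S

/-- The separation rule `SA(b,d)`: from `b I x` infer `d I x`. -/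
def ruleSA (b d : ObName) : Term → Term → Prop :=
  fun t t' => ∃ x : FtName, t = Term.pos (.rI b x) ∧ t' = Term.pos (.rI d x)

/-- The separation rule `SX(y,z)`: from `a I y` infer `a I z`. -/
def ruleSX (y z : FtName) : Term → Term → Prop :=
  fun t t' => ∃ a : ObName, t = Term.pos (.rI a y) ∧ t' = Term.pos (.rI a z)

/-- The rule `SA(R_□,R_◇,b)`: from `b R_□ y` infer `y R_◇ b`. -/
def ruleSAR (b : ObName) : Term → Term → Prop :=
  fun t t' => ∃ x : FtName, t = Term.pos (.rbox b x) ∧ t' = Term.pos (.rdia x b)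

/-- The rule `SX(R_◇,R_□,y)`: from `y R_◇ a` infer `a R_□ y`. -/
def ruleSXR (y : FtName) : Term → Term → Prop :=
  fun t t' => ∃ a : ObName, t = Term.pos (.rdia y a) ∧ t' = Term.pos (.rbox a y)

/-! ## Semantics: enriched formal contexts -/

/-- `I^{(1)}[B]` -/
def gup {O F : Type} (I : O → F → Prop) (B : Set O) : Set F := {x | ∀ a ∈ B, I a x}

/-- `I^{(0)}[Y]` -/
def gdn {O F : Type} (I : O → F → Prop) (Y : Set F) : Set O := {a | ∀ x ∈ Y, I a x}

/-- Galois-stability for sets of objects. -/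
def StableO {O F : Type} (I : O → F → Prop) (B : Set O) : Prop := gdn I (gup I B) = B

/-- Galois-stability for sets of features. -/
def StableF {O F : Type} (I : O → F → Prop) (Y : Set F) : Prop := gup I (gdn I Y) = Y

/-- An interpretation of LE-ALC: an enriched formal context `(Ob, Ft, I, R_□, R_◇)`
together with interpretations of the individual names and of the atomic
concepts (an atomic concept is interpreted by the formal concept whose
extent is `vA n` and whose intent is `gup I (vA n)`). -/
structure Model where
  Ob : Type
  Ft : Type
  I : Ob → Ft → Prop
  Rb : Ob → Ft → Prop
  Rd : Ft → Ob → Prop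
  oi : ObName → Ob
  fi : FtName → Ft
  vA : ℕ → Set Ob

/-- Intent of the interpretation of an atomic concept. -/
def Model.vX (M : Model) (n : ℕ) : Set M.Ft := gup M.I (M.vA n)

/-- Well-formedness of an interpretation: `R_□` and `R_◇` are `I`-compatible,
and atomic concepts are interpreted by formal concepts. -/
def Model.Good (M : Model) : Prop :=
  (∀ x, StableO M.I {a | M.Rb a x}) ∧
  (∀ a, StableF M.I {x | M.Rb a x}) ∧
  (∀ a, StableF M.I {x | M.Rd x a}) ∧
  (∀ x, StableO M.I {a | M.Rd x a}) ∧
  (∀ n, StableO M.I (M.vA n))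

/-- The interpretation `C^M = (extent, intent)` of a concept. -/
def Model.ci (M : Model) : Cpt → Set M.Ob × Set M.Ft
  | .atom n => (M.vA n, M.vX n)
  | .meet C₁ C₂ =>
      ((Model.ci M C₁).1 ∩ (Model.ci M C₂).1,
        gup M.I ((Model.ci M C₁).1 ∩ (Model.ci M C₂).1))
  | .join C₁ C₂ =>
      (gdn M.I ((Model.ci M C₁).2 ∩ (Model.ci M C₂).2),
        (Model.ci M C₁).2 ∩ (Model.ci M C₂).2)
  | .box C =>
      (gdn M.Rb (Model.ci M C).2, gup M.I (gdn M.Rb (Model.ci M C).2))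
  | .dia C =>
      (gdn M.I (gup (fun a x => M.Rd x a) (Model.ci M C).1),
        gup (fun a x => M.Rd x a) (Model.ci M C).1)

/-- Satisfaction of positive ABox terms. -/
def Model.SatP (M : Model) : PTerm → Prop
  | .rI b y => M.I (M.oi b) (M.fi y)
  | .rbox b y => M.Rb (M.oi b) (M.fi y)
  | .rdia y b => M.Rd (M.fi y) (M.oi b)
  | .mem b C => M.oi b ∈ (Model.ci M C).1
  | .fmem y C => M.fi y ∈ (Model.ci M C).2

/-- Satisfaction of ABox terms. -/
def Model.Sat (M : Model) : Term → Prop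
  | .pos t => M.SatP t
  | .neg t => ¬ M.SatP t

/-- `M` is a model of the set of terms `A`. -/
def Model.SatAll (M : Model) (A : Set Term) : Prop := ∀ t ∈ A, M.Sat t

/-- An ABox is consistent iff it has a model. -/
def Consistent (A : Set Term) : Prop := ∃ M : Model, M.Good ∧ M.SatAll A

/-- `A ⊨ t`: every model of `A` satisfies `t`. -/
def Entails (A : Set Term) (t : Term) : Prop :=
  ∀ M : Model, M.Good → M.SatAll A → M.Sat t

/-- `A ⊨ C₁ ⊑ C₂`: in every model of `A`, `C₁^M ≤ C₂^M` in the concept lattice. -/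
def EntailsSub (A : Set Term) (C₁ C₂ : Cpt) : Prop :=
  ∀ M : Model, M.Good → M.SatAll A → (Model.ci M C₁).1 ⊆ (Model.ci M C₂).1

/-! ### Semantic concept operations -/

/-- The operation `[R_□]` on (extent, intent) pairs. -/
def Model.cbox (M : Model) (c : Set M.Ob × Set M.Ft) : Set M.Ob × Set M.Ft :=
  (gdn M.Rb c.2, gup M.I (gdn M.Rb c.2))

/-- The operation `⟨R_◇⟩` on (extent, intent) pairs. -/
def Model.cdia (M : Model) (c : Set M.Ob × Set M.Ft) : Set M.Ob × Set M.Ft :=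
  (gdn M.I (gup (fun a x => M.Rd x a) c.1), gup (fun a x => M.Rd x a) c.1)

/-- The operation `◆` (left adjoint of `[R_□]`). -/
def Model.cbdia (M : Model) (c : Set M.Ob × Set M.Ft) : Set M.Ob × Set M.Ft :=
  (gdn M.I (gup M.Rb c.1), gup M.Rb c.1)

/-- The operation `■` (right adjoint of `⟨R_◇⟩`). -/
def Model.cbbox (M : Model) (c : Set M.Ob × Set M.Ft) : Set M.Ob × Set M.Ft :=
  (gdn (fun a x => M.Rd x a) c.2, gup M.I (gdn (fun a x => M.Rd x a) c.2))

/-- The concept `𝐚 = (a^{↑↓}, a^{↑})` generated by an object. -/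
def Model.genO (M : Model) (a : M.Ob) : Set M.Ob × Set M.Ft :=
  (gdn M.I (gup M.I {a}), gup M.I {a})

/-- The concept `𝐱 = (x^{↓}, x^{↓↑})` generated by a feature. -/
def Model.genF (M : Model) (x : M.Ft) : Set M.Ob × Set M.Ft :=
  (gdn M.I {x}, gup M.I (gdn M.I {x}))

/-- The concept companion `con(b)` of an object name, interpreted in `M`. -/
def Model.conO (M : Model) : ObName → Set M.Ob × Set M.Ft
  | .base n => M.genO (M.oi (.base n))
  | .cls C => M.genO (M.oi (.cls C))
  | .dia b => M.cdia (Model.conO M b)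
  | .bdia b => M.cbdia (Model.conO M b)

/-- The concept companion `con(y)` of a feature name, interpreted in `M`. -/
def Model.conF (M : Model) : FtName → Set M.Ob × Set M.Ft
  | .base n => M.genF (M.fi (.base n))
  | .cls C => M.genF (M.fi (.cls C))
  | .box y => M.cbox (Model.conF M y)
  | .bbox y => M.cbbox (Model.conF M y)

/-! ### The canonical model built from the tableaux completion -/

/-- Classical `dite`. -/
noncomputable def cdite {α : Sort*} (p : Prop) (f : p → α) (g : ¬ p → α) : α :=
  @dite α p (Classical.dec p) f g

/-- The canonical model built from the tableaux completion `Ā` of `A`: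
its objects (resp. features) are the object (resp. feature) names occurring
in `Ā` (plus a dummy point interpreting the names not occurring in `Ā`),
every name occurring in `Ā` is interpreted by itself, the relations are read
off from `Ā`, and an atomic concept `D` is interpreted by the formal concept
`(x_D^↓, a_D^↑)`. -/
noncomputable def canModel (A : Finset Term) : Model where
  Ob := Option {b : ObName // ObOccurs b (Compl noExt ↑A)}
  Ft := Option {y : FtName // FtOccurs y (Compl noExt ↑A)}
  I := fun o x => ∃ b y, o = some b ∧ x = some y ∧
        Term.pos (.rI b.1 y.1) ∈ Compl noExt ↑A
  Rb := fun o x => ∃ b y, o = some b ∧ x = some y ∧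
        Term.pos (.rbox b.1 y.1) ∈ Compl noExt ↑A
  Rd := fun x o => ∃ b y, o = some b ∧ x = some y ∧
        Term.pos (.rdia y.1 b.1) ∈ Compl noExt ↑A
  oi := fun b => cdite (ObOccurs b (Compl noExt ↑A)) (fun h => some ⟨b, h⟩) (fun _ => none)
  fi := fun y => cdite (FtOccurs y (Compl noExt ↑A)) (fun h => some ⟨y, h⟩) (fun _ => none)
  vA := fun n => {o | ∃ b, o = some b ∧
        Term.pos (.rI b.1 (.cls (.atom n))) ∈ Compl noExt ↑A}

/-! ### ◇-leading and □-leading concepts -/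

/-- ◇-leading concepts. -/
inductive DiaLeading : Cpt → Prop
  | atom (n : ℕ) : DiaLeading (.dia (.atom n))
  | dia {C : Cpt} : DiaLeading C → DiaLeading (.dia C)
  | join {C : Cpt} (C₁ : Cpt) : DiaLeading C → DiaLeading (.join C C₁)
  | meet {C₁ C₂ : Cpt} : DiaLeading C₁ → DiaLeading C₂ → DiaLeading (.meet C₁ C₂)

/-- □-leading concepts. -/
inductive BoxLeading : Cpt → Prop
  | atom (n : ℕ) : BoxLeading (.box (.atom n))
  | box {C : Cpt} : BoxLeading C → BoxLeading (.box C)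
  | meet {C : Cpt} (C₁ : Cpt) : BoxLeading C → BoxLeading (.meet C C₁)
  | join {C₁ C₂ : Cpt} : BoxLeading C₁ → BoxLeading C₂ → BoxLeading (.join C₁ C₂)

/-! ### Auxiliary: Galois connection basics -/

section Galois
variable {O F F' : Type}

theorem gup_anti {I : O → F → Prop} {B B' : Set O} (h : B ⊆ B') : gup I B' ⊆ gup I B :=
  fun x hx a ha => hx a (h ha)

theorem gdn_anti {I : O → F → Prop} {Y Y' : Set F} (h : Y ⊆ Y') : gdn I Y' ⊆ gdn I Y :=
  fun a ha x hx => ha x (h hx)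

theorem subset_gdn_gup {I : O → F → Prop} (B : Set O) : B ⊆ gdn I (gup I B) :=
  fun a ha x hx => hx a ha

theorem subset_gup_gdn {I : O → F → Prop} (Y : Set F) : Y ⊆ gup I (gdn I Y) :=
  fun x hx a ha => ha x hx

theorem gup_gdn_gup {I : O → F → Prop} (B : Set O) : gup I (gdn I (gup I B)) = gup I B :=
  Set.Subset.antisymm (gup_anti (subset_gdn_gup B)) (subset_gup_gdn _)

theorem gdn_gup_gdn {I : O → F → Prop} (Y : Set F) : gdn I (gup I (gdn I Y)) = gdn I Y :=
  Set.Subset.antisymm (gdn_anti (subset_gup_gdn Y)) (subset_gdn_gup _)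

theorem closureO_subset {I : O → F → Prop} {S T : Set O} (hT : StableO I T) (h : S ⊆ T) :
    gdn I (gup I S) ⊆ T := hT ▸ gdn_anti (gup_anti h)

theorem closureF_subset {I : O → F → Prop} {S T : Set F} (hT : StableF I T) (h : S ⊆ T) :
    gup I (gdn I S) ⊆ T := hT ▸ gup_anti (gdn_anti h)

theorem stableO_gdn {I : O → F → Prop} {R : O → F' → Prop}
    (h : ∀ x, StableO I {a | R a x}) (Y : Set F') : StableO I (gdn R Y) := by
  refine Set.Subset.antisymm (fun a ha x hx => ?_) (subset_gdn_gup _)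
  have hsub : gdn R Y ⊆ {a | R a x} := fun b hb => hb x hx
  exact closureO_subset (h x) hsub ha

theorem stableF_gup {I : O → F → Prop} {O' : Type} {R : O' → F → Prop}
    (h : ∀ a, StableF I {x | R a x}) (B : Set O') : StableF I (gup R B) := by
  refine Set.Subset.antisymm (fun x hx a ha => ?_) (subset_gup_gdn _)
  have hsub : gup R B ⊆ {x | R a x} := fun y hy => hy a ha
  exact closureF_subset (h a) hsub hx

theorem stableO_inter {I : O → F → Prop} {S T : Set O} (hS : StableO I S) (hT : StableO I T) :
    StableO I (S ∩ T) :=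
  Set.Subset.antisymm
    (Set.subset_inter (closureO_subset hS Set.inter_subset_left)
      (closureO_subset hT Set.inter_subset_right))
    (subset_gdn_gup _)

theorem stableF_inter {I : O → F → Prop} {S T : Set F} (hS : StableF I S) (hT : StableF I T) :
    StableF I (S ∩ T) :=
  Set.Subset.antisymm
    (Set.subset_inter (closureF_subset hS Set.inter_subset_left)
      (closureF_subset hT Set.inter_subset_right))
    (subset_gup_gdn _)

theorem stableO_gdn' {I : O → F → Prop} (Y : Set F) : StableO I (gdn I Y) := gdn_gup_gdn Y

theorem stableF_gup' {I : O → F → Prop} (B : Set O) : StableF I (gup I B) := gup_gdn_gup B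

end Galois

/-! ### Formal concepts of a model -/

/-- `c` is a formal concept of `M`. -/
def IsCpt (M : Model) (c : Set M.Ob × Set M.Ft) : Prop :=
  c.1 = gdn M.I c.2 ∧ c.2 = gup M.I c.1

namespace IsCpt

theorem stable1 {M : Model} {c} (hc : IsCpt M c) : StableO M.I c.1 := by
  rw [hc.1]; exact stableO_gdn' _

theorem stable2 {M : Model} {c} (hc : IsCpt M c) : StableF M.I c.2 := by
  rw [hc.2]; exact stableF_gup' _

theorem le_iff {M : Model} {c d} (hc : IsCpt M c) (hd : IsCpt M d) :
    c.1 ⊆ d.1 ↔ d.2 ⊆ c.2 := by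
  constructor
  · intro h; rw [hd.2, hc.2]; exact gup_anti h
  · intro h; rw [hc.1, hd.1]; exact gdn_anti h

end IsCpt

section GoodCpt

variable {M : Model} (hg : M.Good)
include hg

omit hg in
theorem isCpt_genO (a : M.Ob) : IsCpt M (M.genO a) := ⟨rfl, (gup_gdn_gup _).symm⟩

omit hg in
theorem isCpt_genF (x : M.Ft) : IsCpt M (M.genF x) := ⟨(gdn_gup_gdn _).symm, rfl⟩

theorem isCpt_cbox {c} : IsCpt M (M.cbox c) :=
  ⟨(stableO_gdn hg.1 c.2).symm, rfl⟩

theorem isCpt_cdia {c} : IsCpt M (M.cdia c) :=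
  ⟨rfl, (stableF_gup hg.2.2.1 c.1).symm⟩

theorem isCpt_cbdia {c} : IsCpt M (M.cbdia c) :=
  ⟨rfl, (stableF_gup hg.2.1 c.1).symm⟩

theorem isCpt_cbbox {c} : IsCpt M (M.cbbox c) :=
  ⟨(stableO_gdn hg.2.2.2.1 c.2).symm, rfl⟩

theorem isCpt_ci (C : Cpt) : IsCpt M (M.ci C) := by
  induction C with
  | atom n => exact ⟨(hg.2.2.2.2 n).symm, rfl⟩
  | meet C₁ C₂ ih₁ ih₂ =>
      exact ⟨(stableO_inter ih₁.stable1 ih₂.stable1).symm, rfl⟩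
  | join C₁ C₂ ih₁ ih₂ =>
      exact ⟨rfl, (stableF_inter ih₁.stable2 ih₂.stable2).symm⟩
  | box C ih => exact isCpt_cbox hg
  | dia C ih => exact isCpt_cdia hg

end GoodCpt
/-! ### Soundness: the semantic invariant -/

/-- Semantic companion of an object name (soundness version: classifying
names are interpreted by the concept they classify). -/
def sConO (M : Model) : ObName → Set M.Ob × Set M.Ft
  | .base n => M.genO (M.oi (.base n))
  | .cls C => M.ci C
  | .dia b => M.cdia (sConO M b)
  | .bdia b => M.cbdia (sConO M b)

/-- Semantic companion of a feature name. -/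
def sConF (M : Model) : FtName → Set M.Ob × Set M.Ft
  | .base n => M.genF (M.fi (.base n))
  | .cls C => M.ci C
  | .box y => M.cbox (sConF M y)
  | .bbox y => M.cbbox (sConF M y)

theorem isCpt_sConO {M : Model} (hg : M.Good) (b : ObName) : IsCpt M (sConO M b) := by
  induction b with
  | base n => exact isCpt_genO _
  | cls C => exact isCpt_ci hg C
  | dia b ih => exact isCpt_cdia hg
  | bdia b ih => exact isCpt_cbdia hg

theorem isCpt_sConF {M : Model} (hg : M.Good) (y : FtName) : IsCpt M (sConF M y) := by
  induction y with
  | base n => exact isCpt_genF _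
  | cls C => exact isCpt_ci hg C
  | box y ih => exact isCpt_cbox hg
  | bbox y ih => exact isCpt_cbbox hg

theorem sConF_boxS (M : Model) (y : FtName) : sConF M (FtName.boxS y) = M.cbox (sConF M y) := by
  cases y <;> rfl

theorem sConO_diaS (M : Model) (b : ObName) : sConO M (ObName.diaS b) = M.cdia (sConO M b) := by
  cases b <;> rfl

/-- The semantic invariant on positive terms. -/
def InvP (M : Model) : PTerm → Prop
  | .rI b y => (sConO M b).1 ⊆ (sConF M y).1
  | .rbox b y => (sConO M b).1 ⊆ (M.cbox (sConF M y)).1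
  | .rdia y b => (M.cdia (sConO M b)).1 ⊆ (sConF M y).1
  | .mem b C => (sConO M b).1 ⊆ (M.ci C).1
  | .fmem y C => (M.ci C).1 ⊆ (sConF M y).1

/-- The semantic invariant on terms. -/
def Inv (M : Model) : Term → Prop
  | .pos p => InvP M p
  | .neg p => ¬ InvP M p

section PlainEquiv

variable {M : Model} (hg : M.Good)
include hg

theorem mem_stable_iff {S : Set M.Ob} (hS : StableO M.I S) (a : M.Ob) :
    a ∈ S ↔ (M.genO a).1 ⊆ S := by
  constructor
  · intro h
    exact closureO_subset hS (Set.singleton_subset_iff.2 h)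
  · intro h
    exact h (subset_gdn_gup {a} rfl)

omit hg in
theorem mem_gup_iff {B : Set M.Ob} (x : M.Ft) :
    x ∈ gup M.I B ↔ B ⊆ (M.genF x).1 := by
  constructor
  · intro h a ha z hz
    rcases hz with rfl
    exact h a ha
  · intro h a ha
    exact h ha x rfl

theorem mem_stableF_iff {S : Set M.Ft} (hS : StableF M.I S) (x : M.Ft) :
    x ∈ S ↔ (M.genF x).2 ⊆ S := by
  constructor
  · intro h
    exact closureF_subset hS (Set.singleton_subset_iff.2 h)
  · intro h
    exact h (subset_gup_gdn {x} rfl)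

/-- Equivalence of actual satisfaction and the invariant, for terms whose
individual names are all base names. -/
theorem satP_iff_invP (p : PTerm)
    (hobj : ∀ b ∈ p.objs, b.IsBase) (hft : ∀ y ∈ p.feats, y.IsBase) :
    M.SatP p ↔ InvP M p := by
  cases p with
  | rI b y =>
      obtain ⟨n, rfl⟩ := hobj b (by simp [PTerm.objs])
      obtain ⟨m, rfl⟩ := hft y (by simp [PTerm.feats])
      show M.I _ _ ↔ (M.genO _).1 ⊆ (M.genF _).1
      set a0 := M.oi (.base n); set x0 := M.fi (.base m)
      constructor
      · intro h a ha z hz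
        rcases hz with rfl
        exact ha x0 (fun a' ha' => by rcases ha' with rfl; exact h)
      · intro h
        exact h (subset_gdn_gup {a0} rfl) x0 rfl
  | rbox b y =>
      obtain ⟨n, rfl⟩ := hobj b (by simp [PTerm.objs])
      obtain ⟨m, rfl⟩ := hft y (by simp [PTerm.feats])
      show M.Rb _ _ ↔ (M.genO _).1 ⊆ gdn M.Rb (M.genF _).2
      set a0 := M.oi (.base n); set x0 := M.fi (.base m)
      constructor
      · intro h a ha x hx
        have ha' : a ∈ {a' | M.Rb a' x0} :=
          closureO_subset (hg.1 x0) (Set.singleton_subset_iff.2 h) ha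
        exact closureF_subset (hg.2.1 a) (Set.singleton_subset_iff.2 ha') hx
      · intro h
        exact h (subset_gdn_gup {a0} rfl) x0 (subset_gup_gdn {x0} rfl)
  | rdia y b =>
      obtain ⟨n, rfl⟩ := hobj b (by simp [PTerm.objs])
      obtain ⟨m, rfl⟩ := hft y (by simp [PTerm.feats])
      show M.Rd _ _ ↔ (M.cdia (M.genO _)).1 ⊆ (M.genF _).1
      set a0 := M.oi (.base n); set x0 := M.fi (.base m)
      rw [(isCpt_cdia hg (c := M.genO a0)).le_iff (isCpt_genF x0)]
      show _ ↔ (M.genF x0).2 ⊆ gup (fun a x => M.Rd x a) (M.genO a0).1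
      constructor
      · intro h x hx a ha
        have ha' : a ∈ {a' | M.Rd x0 a'} :=
          closureO_subset (hg.2.2.2.1 x0) (Set.singleton_subset_iff.2 h) ha
        exact closureF_subset (hg.2.2.1 a) (Set.singleton_subset_iff.2 ha') hx
      · intro h
        exact h (subset_gup_gdn {x0} rfl) a0 (subset_gdn_gup {a0} rfl)
  | mem b C =>
      obtain ⟨n, rfl⟩ := hobj b (by simp [PTerm.objs])
      exact mem_stable_iff hg (isCpt_ci hg C).stable1 _
  | fmem y C =>
      obtain ⟨m, rfl⟩ := hft y (by simp [PTerm.feats])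
      show M.fi _ ∈ (M.ci C).2 ↔ _
      rw [(isCpt_ci hg C).2]
      exact mem_gup_iff _

theorem sat_iff_inv {t : Term} (ht : t.Plain) : M.Sat t ↔ Inv M t := by
  cases t with
  | pos p => exact satP_iff_invP hg p ht.1 ht.2
  | neg p => exact not_congr (satP_iff_invP hg p ht.1 ht.2)

end PlainEquiv
/-! ### Soundness: the invariant is preserved by the expansion rules -/

theorem inv_ruleClosed {A : Set Term} {M : Model} (hg : M.Good)
    (hA : ∀ t ∈ A, Inv M t) : RuleClosed noExt A {t | Inv M t} := by
  refine ⟨hA, fun t d => ?_⟩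
  cases d with
  | create_a h => exact fun _ h => h
  | create_x h => exact fun _ h => h
  | @basic b y C h1 h2 =>
      have h1' : (sConO M b).1 ⊆ (M.ci C).1 := h1
      have h2' : (M.ci C).1 ⊆ (sConF M y).1 := h2
      exact fun a ha => h2' (h1' ha)
  | @andA_l b C₁ C₂ h =>
      have h' : (sConO M b).1 ⊆ (M.ci (.meet C₁ C₂)).1 := h
      exact fun a ha => (h' ha).1
  | @andA_r b C₁ C₂ h =>
      have h' : (sConO M b).1 ⊆ (M.ci (.meet C₁ C₂)).1 := h
      exact fun a ha => (h' ha).2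
  | @orX_l y C₁ C₂ h =>
      have h' : (M.ci (.join C₁ C₂)).1 ⊆ (sConF M y).1 := h
      have hsub : (M.ci C₁).1 ⊆ (M.ci (.join C₁ C₂)).1 := by
        rw [(isCpt_ci hg C₁).1]
        exact gdn_anti Set.inter_subset_left
      exact fun a ha => h' (hsub ha)
  | @orX_r y C₁ C₂ h =>
      have h' : (M.ci (.join C₁ C₂)).1 ⊆ (sConF M y).1 := h
      have hsub : (M.ci C₂).1 ⊆ (M.ci (.join C₁ C₂)).1 := by
        rw [(isCpt_ci hg C₂).1]
        exact gdn_anti Set.inter_subset_right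
      exact fun a ha => h' (hsub ha)
  | @boxR b y C h1 h2 =>
      have h1' : (sConO M b).1 ⊆ (M.ci (.box C)).1 := h1
      have h2' : (M.ci C).1 ⊆ (sConF M y).1 := h2
      have hflip : (sConF M y).2 ⊆ (M.ci C).2 :=
        ((isCpt_ci hg C).le_iff (isCpt_sConF hg y)).1 h2'
      exact fun a ha x hx => h1' ha x (hflip hx)
  | @diaR b y C h1 h2 =>
      have h1' : (M.ci (.dia C)).1 ⊆ (sConF M y).1 := h1
      have h2' : (sConO M b).1 ⊆ (M.ci C).1 := h2
      have hflip : (sConF M y).2 ⊆ (M.ci (.dia C)).2 :=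
        ((isCpt_ci hg (.dia C)).le_iff (isCpt_sConF hg y)).1 h1'
      refine ((isCpt_cdia hg).le_iff (isCpt_sConF hg y)).2 ?_
      exact fun x hx a ha => hflip hx a (h2' ha)
  | @andA_inv b C₁ C₂ h1 h2 _ =>
      have h1' : (sConO M b).1 ⊆ (M.ci C₁).1 := h1
      have h2' : (sConO M b).1 ⊆ (M.ci C₂).1 := h2
      exact fun a ha => ⟨h1' ha, h2' ha⟩
  | @orX_inv y C₁ C₂ h1 h2 _ =>
      have h1' : (M.ci C₁).1 ⊆ (sConF M y).1 := h1
      have h2' : (M.ci C₂).1 ⊆ (sConF M y).1 := h2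
      have f1 := ((isCpt_ci hg C₁).le_iff (isCpt_sConF hg y)).1 h1'
      have f2 := ((isCpt_ci hg C₂).le_iff (isCpt_sConF hg y)).1 h2'
      refine ((isCpt_ci hg (.join C₁ C₂)).le_iff (isCpt_sConF hg y)).2 ?_
      exact fun x hx => ⟨f1 hx, f2 hx⟩
  | @adj_box_l b y h =>
      have h' : (sConO M b).1 ⊆ (M.cbox (sConF M y)).1 := h
      have hY : (sConF M y).2 ⊆ gup M.Rb (sConO M b).1 := fun x hx a ha => h' ha x hx
      show (M.cbdia (sConO M b)).1 ⊆ (sConF M y).1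
      intro a ha
      rw [(isCpt_sConF hg y).1]
      exact gdn_anti hY ha
  | @adj_box_r b y h =>
      have h' : (sConO M b).1 ⊆ (M.cbox (sConF M y)).1 := h
      show (sConO M b).1 ⊆ (sConF M (FtName.boxS y)).1
      rw [sConF_boxS]
      exact h'
  | @adj_dia_l b y h =>
      have h' : (M.cdia (sConO M b)).1 ⊆ (sConF M y).1 := h
      show (sConO M (ObName.diaS b)).1 ⊆ (sConF M y).1
      rw [sConO_diaS]
      exact h'
  | @adj_dia_r b y h =>
      have h' : (M.cdia (sConO M b)).1 ⊆ (sConF M y).1 := h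
      have hflip : (sConF M y).2 ⊆ (M.cdia (sConO M b)).2 :=
        ((isCpt_cdia hg).le_iff (isCpt_sConF hg y)).1 h'
      exact fun a ha x hx => hflip hx a ha
  | @icomp_box b y h =>
      have h' : (sConO M b).1 ⊆ (sConF M (FtName.boxS y)).1 := h
      rw [sConF_boxS] at h'
      exact h'
  | @icomp_bbox b y h =>
      have h' : (sConO M b).1 ⊆ (M.cbbox (sConF M y)).1 := h
      refine ((isCpt_cdia hg).le_iff (isCpt_sConF hg y)).2 ?_
      exact fun x hx a ha => h' ha x hx
  | @icomp_dia b y h =>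
      have h' : (sConO M (ObName.diaS b)).1 ⊆ (sConF M y).1 := h
      rw [sConO_diaS] at h'
      exact h'
  | @icomp_bdia b y h =>
      have h' : (M.cbdia (sConO M b)).1 ⊆ (sConF M y).1 := h
      have hflip : (sConF M y).2 ⊆ (M.cbdia (sConO M b)).2 :=
        ((isCpt_cbdia hg).le_iff (isCpt_sConF hg y)).1 h'
      exact fun a ha x hx => hflip hx a ha
  | neg_b h =>
      have h' : ¬ InvP M (.mem _ _) := h
      exact h'
  | neg_x h =>
      have h' : ¬ InvP M (.fmem _ _) := h
      exact h'
  | app_x h =>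
      have h' : InvP M (.rI _ (.cls _)) := h
      exact h'
  | app_a h =>
      have h' : InvP M (.rI (.cls _) _) := h
      exact h'
  | extra h _ => cases h

/-- Soundness: a clash in the completion implies inconsistency. -/
theorem clash_sound {A : Set Term} (hwf : ABoxWF A) (hc : HasClash (Compl noExt A)) :
    ¬ Consistent A := by
  rintro ⟨M, hg, hsat⟩
  have hA : ∀ t ∈ A, Inv M t := fun t ht => (sat_iff_inv hg (hwf t ht)).1 (hsat t ht)
  have hcl := inv_ruleClosed hg hA
  obtain ⟨β, _, hp, hn⟩ := hc
  have hp' : Inv M (.pos β) := hp _ hcl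
  have hn' : Inv M (.neg β) := hn _ hcl
  exact hn' hp'
/-! ### The completion is closed under the rules -/

theorem deriv_mono {E : Term → Term → Prop} {A S S' : Set Term} (hs : S ⊆ S') {t : Term}
    (d : Deriv E A S t) : Deriv E A S' t := by
  cases d with
  | create_a h => exact .create_a h
  | create_x h => exact .create_x h
  | basic h1 h2 => exact .basic (hs h1) (hs h2)
  | andA_l h => exact .andA_l (hs h)
  | andA_r h => exact .andA_r (hs h)
  | orX_l h => exact .orX_l (hs h)
  | orX_r h => exact .orX_r (hs h)
  | boxR h1 h2 => exact .boxR (hs h1) (hs h2)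
  | diaR h1 h2 => exact .diaR (hs h1) (hs h2)
  | andA_inv h1 h2 ho => exact .andA_inv (hs h1) (hs h2) ho
  | orX_inv h1 h2 ho => exact .orX_inv (hs h1) (hs h2) ho
  | adj_box_l h => exact .adj_box_l (hs h)
  | adj_box_r h => exact .adj_box_r (hs h)
  | adj_dia_l h => exact .adj_dia_l (hs h)
  | adj_dia_r h => exact .adj_dia_r (hs h)
  | icomp_box h => exact .icomp_box (hs h)
  | icomp_bbox h => exact .icomp_bbox (hs h)
  | icomp_dia h => exact .icomp_dia (hs h)
  | icomp_bdia h => exact .icomp_bdia (hs h)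
  | neg_b h => exact .neg_b (hs h)
  | neg_x h => exact .neg_x (hs h)
  | app_x h => exact .app_x (hs h)
  | app_a h => exact .app_a (hs h)
  | extra h ht => exact .extra h (hs ht)

theorem compl_min {E : Term → Term → Prop} {A S : Set Term} (h : RuleClosed E A S) :
    Compl E A ⊆ S := fun _ ht => ht S h

theorem compl_ruleClosed (E : Term → Term → Prop) (A : Set Term) :
    RuleClosed E A (Compl E A) := by
  refine ⟨fun t ht S hS => hS.1 ht, fun t d S hS => ?_⟩
  exact hS.2 t (deriv_mono (compl_min hS) d)

theorem compl_deriv {E : Term → Term → Prop} {A : Set Term} {t : Term}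
    (d : Deriv E A (Compl E A) t) : t ∈ Compl E A :=
  (compl_ruleClosed E A).2 t d

/-! ### Subconcepts and occurrence -/

theorem self_mem_subs (C : Cpt) : C ∈ C.subs := by
  cases C <;> simp [Cpt.subs]

theorem subs_subset {D C : Cpt} (h : D ∈ C.subs) : D.subs ⊆ C.subs := by
  induction C with
  | atom n =>
      simp [Cpt.subs] at h
      subst h
      exact subset_rfl
  | meet C₁ C₂ ih₁ ih₂ =>
      rw [Cpt.subs, Finset.mem_insert, Finset.mem_union] at h
      rcases h with h | h | h
      · subst h; exact subset_rfl
      · exact (ih₁ h).trans ((Finset.subset_union_left).trans (Finset.subset_insert _ _))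
      · exact (ih₂ h).trans ((Finset.subset_union_right).trans (Finset.subset_insert _ _))
  | join C₁ C₂ ih₁ ih₂ =>
      rw [Cpt.subs, Finset.mem_insert, Finset.mem_union] at h
      rcases h with h | h | h
      · subst h; exact subset_rfl
      · exact (ih₁ h).trans ((Finset.subset_union_left).trans (Finset.subset_insert _ _))
      · exact (ih₂ h).trans ((Finset.subset_union_right).trans (Finset.subset_insert _ _))
  | box C ih =>
      rw [Cpt.subs, Finset.mem_insert] at h
      rcases h with h | h
      · subst h; exact subset_rfl
      · exact (ih h).trans (Finset.subset_insert _ _)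
  | dia C ih =>
      rw [Cpt.subs, Finset.mem_insert] at h
      rcases h with h | h
      · subst h; exact subset_rfl
      · exact (ih h).trans (Finset.subset_insert _ _)

theorem cpts_closed {t : Term} {C D : Cpt} (hC : C ∈ t.cpts) (hD : D ∈ C.subs) :
    D ∈ t.cpts := by
  cases t with
  | pos p =>
      cases p with
      | mem b C₀ => exact subs_subset hC hD
      | fmem y C₀ => exact subs_subset hC hD
      | rI b y => exact absurd hC (by simp [Term.cpts])
      | rbox b y => exact absurd hC (by simp [Term.cpts])
      | rdia y b => exact absurd hC (by simp [Term.cpts])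
  | neg p =>
      cases p with
      | mem b C₀ => exact subs_subset hC hD
      | fmem y C₀ => exact subs_subset hC hD
      | rI b y => exact absurd hC (by simp [Term.cpts])
      | rbox b y => exact absurd hC (by simp [Term.cpts])
      | rdia y b => exact absurd hC (by simp [Term.cpts])

theorem occurs_of_subs {A : Set Term} {C D : Cpt} (h : Occurs C A) (hD : D ∈ C.subs) :
    Occurs D A := by
  obtain ⟨t, ht, hc⟩ := h
  exact ⟨t, ht, cpts_closed hc hD⟩
/-! ### The canonical model is a good model -/

theorem stableO_of_col {O F : Type} {I : O → F → Prop} {S : Set O} {x : F}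
    (h1 : x ∈ gup I S) (h2 : ∀ a, I a x → a ∈ S) : StableO I S :=
  Set.Subset.antisymm (fun a ha => h2 a (ha x h1)) (subset_gdn_gup _)

theorem stableF_of_row {O F : Type} {I : O → F → Prop} {S : Set F} {a : O}
    (h1 : a ∈ gdn I S) (h2 : ∀ x, I a x → x ∈ S) : StableF I S :=
  Set.Subset.antisymm (fun x hx => h2 x (hx a h1)) (subset_gup_gdn _)

/-- The completion, as a set of terms. -/
abbrev Kc (A : Finset Term) : Set Term := Compl noExt (↑A : Set Term)

section Canon

variable (A : Finset Term)

theorem can_I_none_r {o : (canModel A).Ob} : ¬ (canModel A).I o none := by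
  rintro ⟨b, y, -, hy, -⟩
  exact nomatch hy

theorem can_I_none_l {x : (canModel A).Ft} : ¬ (canModel A).I none x := by
  rintro ⟨b, y, hb, -, -⟩
  exact nomatch hb

theorem stableO_empty_can : StableO (canModel A).I (∅ : Set (canModel A).Ob) := by
  refine Set.Subset.antisymm (fun a ha => ?_) (Set.empty_subset _)
  exact absurd (ha none (fun o ho => absurd ho (Set.notMem_empty o))) (can_I_none_r A)

theorem stableF_empty_can : StableF (canModel A).I (∅ : Set (canModel A).Ft) := by
  refine Set.Subset.antisymm (fun x hx => ?_) (Set.empty_subset _)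
  exact absurd (hx none (fun z hz => absurd hz (Set.notMem_empty z))) (can_I_none_l A)

theorem can_good : (canModel A).Good := by
  refine ⟨?_, ?_, ?_, ?_, ?_⟩
  · -- columns of R_□ are stable
    rintro (_ | y)
    · have he : {a | (canModel A).Rb a none} = ∅ := by
        ext o
        simp only [Set.mem_setOf_eq, Set.mem_empty_iff_false, iff_false]
        rintro ⟨b, y, -, hy, -⟩
        exact nomatch hy
      rw [he]; exact stableO_empty_can A
    · rcases Set.eq_empty_or_nonempty {a | (canModel A).Rb a (some y)} with he | ⟨a0, ha0⟩
      · rw [he]; exact stableO_empty_can A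
      · obtain ⟨b0, y0, rfl, hy0, hK0⟩ := ha0
        injection hy0 with hy0; subst hy0
        have hocc : FtOccurs (FtName.boxS y.1) (Kc A) :=
          ⟨_, compl_deriv (.adj_box_r hK0), by simp [Term.feats, PTerm.feats]⟩
        refine stableO_of_col (x := some ⟨FtName.boxS y.1, hocc⟩) ?_ ?_
        · rintro a ⟨b, y', rfl, hy', hK⟩
          injection hy' with hy'; subst hy'
          exact ⟨b, _, rfl, rfl, compl_deriv (.adj_box_r hK)⟩
        · rintro a ⟨b, y', rfl, hy', hK⟩
          injection hy' with hy'; subst hy'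
          exact ⟨b, y, rfl, rfl, compl_deriv (.icomp_box hK)⟩
  · -- rows of R_□ are stable
    rintro (_ | b)
    · have he : {x | (canModel A).Rb none x} = ∅ := by
        ext z
        simp only [Set.mem_setOf_eq, Set.mem_empty_iff_false, iff_false]
        rintro ⟨b, y, hb, -, -⟩
        exact nomatch hb
      rw [he]; exact stableF_empty_can A
    · rcases Set.eq_empty_or_nonempty {x | (canModel A).Rb (some b) x} with he | ⟨x0, hx0⟩
      · rw [he]; exact stableF_empty_can A
      · obtain ⟨b0, y0, hb0, rfl, hK0⟩ := hx0
        injection hb0 with hb0; subst hb0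
        have hocc : ObOccurs (ObName.bdia b.1) (Kc A) :=
          ⟨_, compl_deriv (.adj_box_l hK0), by simp [Term.objs, PTerm.objs]⟩
        refine stableF_of_row (a := some ⟨ObName.bdia b.1, hocc⟩) ?_ ?_
        · rintro x ⟨b', y', hb', rfl, hK⟩
          injection hb' with hb'; subst hb'
          exact ⟨_, y', rfl, rfl, compl_deriv (.adj_box_l hK)⟩
        · rintro x ⟨b', y', hb', rfl, hK⟩
          injection hb' with hb'; subst hb'
          exact ⟨b, y', rfl, rfl, compl_deriv (.icomp_bdia hK)⟩
  · -- rows of R_◇ are stable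
    rintro (_ | b)
    · have he : {x | (canModel A).Rd x none} = ∅ := by
        ext z
        simp only [Set.mem_setOf_eq, Set.mem_empty_iff_false, iff_false]
        rintro ⟨b, y, hb, -, -⟩
        exact nomatch hb
      rw [he]; exact stableF_empty_can A
    · rcases Set.eq_empty_or_nonempty {x | (canModel A).Rd x (some b)} with he | ⟨x0, hx0⟩
      · rw [he]; exact stableF_empty_can A
      · obtain ⟨b0, y0, hb0, rfl, hK0⟩ := hx0
        injection hb0 with hb0; subst hb0
        have hocc : ObOccurs (ObName.diaS b.1) (Kc A) :=
          ⟨_, compl_deriv (.adj_dia_l hK0), by simp [Term.objs, PTerm.objs]⟩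
        refine stableF_of_row (a := some ⟨ObName.diaS b.1, hocc⟩) ?_ ?_
        · rintro x ⟨b', y', hb', rfl, hK⟩
          injection hb' with hb'; subst hb'
          exact ⟨_, y', rfl, rfl, compl_deriv (.adj_dia_l hK)⟩
        · rintro x ⟨b', y', hb', rfl, hK⟩
          injection hb' with hb'; subst hb'
          exact ⟨b, y', rfl, rfl, compl_deriv (.icomp_dia hK)⟩
  · -- columns of R_◇ are stable
    rintro (_ | y)
    · have he : {a | (canModel A).Rd none a} = ∅ := by
        ext o
        simp only [Set.mem_setOf_eq, Set.mem_empty_iff_false, iff_false]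
        rintro ⟨b, y, -, hy, -⟩
        exact nomatch hy
      rw [he]; exact stableO_empty_can A
    · rcases Set.eq_empty_or_nonempty {a | (canModel A).Rd (some y) a} with he | ⟨a0, ha0⟩
      · rw [he]; exact stableO_empty_can A
      · obtain ⟨b0, y0, rfl, hy0, hK0⟩ := ha0
        injection hy0 with hy0; subst hy0
        have hocc : FtOccurs (FtName.bbox y.1) (Kc A) :=
          ⟨_, compl_deriv (.adj_dia_r hK0), by simp [Term.feats, PTerm.feats]⟩
        refine stableO_of_col (x := some ⟨FtName.bbox y.1, hocc⟩) ?_ ?_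
        · rintro a ⟨b, y', rfl, hy', hK⟩
          injection hy' with hy'; subst hy'
          exact ⟨b, _, rfl, rfl, compl_deriv (.adj_dia_r hK)⟩
        · rintro a ⟨b, y', rfl, hy', hK⟩
          injection hy' with hy'; subst hy'
          exact ⟨b, y, rfl, rfl, compl_deriv (.icomp_bbox hK)⟩
  · -- interpretations of atomic concepts are stable
    intro n
    rcases Set.eq_empty_or_nonempty ((canModel A).vA n) with he | ⟨a0, ha0⟩
    · rw [he]; exact stableO_empty_can A
    · obtain ⟨b0, rfl, hK0⟩ := ha0
      have hocc : FtOccurs (FtName.cls (.atom n)) (Kc A) :=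
        ⟨_, hK0, by simp [Term.feats, PTerm.feats]⟩
      refine stableO_of_col (x := some ⟨FtName.cls (.atom n), hocc⟩) ?_ ?_
      · rintro a ⟨b, rfl, hK⟩
        exact ⟨b, _, rfl, rfl, hK⟩
      · rintro a ⟨b, y', rfl, hy', hK⟩
        injection hy' with hy'; subst hy'
        exact ⟨b, rfl, hK⟩

end Canon
/-! ### The truth lemma for the canonical model -/

section Truth

variable (A : Finset Term)

/-- The syntactic extent of a concept in the canonical model. -/
def Eset (C : Cpt) : Set (canModel A).Ob :=
  {o | ∃ b : {b : ObName // ObOccurs b (Kc A)},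
      o = some b ∧ Term.pos (.rI b.1 (.cls C)) ∈ Kc A}

/-- The syntactic intent of a concept in the canonical model. -/
def Xset (C : Cpt) : Set (canModel A).Ft :=
  {x | ∃ y : {y : FtName // FtOccurs y (Kc A)},
      x = some y ∧ Term.pos (.rI (.cls C) y.1) ∈ Kc A}

variable {C : Cpt} (hC : Occurs C (↑A : Set Term))
include hC

theorem K_create_a : Term.pos (.mem (.cls C) C) ∈ Kc A := compl_deriv (.create_a hC)

theorem K_create_x : Term.pos (.fmem (.cls C) C) ∈ Kc A := compl_deriv (.create_x hC)

theorem K_aC : Term.pos (.rI (.cls C) (.cls C)) ∈ Kc A :=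
  compl_deriv (.basic (K_create_a A hC) (K_create_x A hC))

theorem obOcc_cls : ObOccurs (.cls C) (Kc A) :=
  ⟨_, K_aC A hC, by simp [Term.objs, PTerm.objs]⟩

theorem ftOcc_cls : FtOccurs (.cls C) (Kc A) :=
  ⟨_, K_aC A hC, by simp [Term.feats, PTerm.feats]⟩

theorem aC_mem_E : some ⟨.cls C, obOcc_cls A hC⟩ ∈ Eset A C := ⟨_, rfl, K_aC A hC⟩

theorem xC_mem_X : some ⟨.cls C, ftOcc_cls A hC⟩ ∈ Xset A C := ⟨_, rfl, K_aC A hC⟩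

theorem gup_Eset : gup (canModel A).I (Eset A C) = Xset A C := by
  ext x
  constructor
  · intro hx
    obtain ⟨b, y, hb, hy, hK⟩ := hx _ (aC_mem_E A hC)
    injection hb with hb
    subst hb
    exact ⟨y, hy, hK⟩
  · rintro ⟨y, rfl, hK⟩ o ⟨b, rfl, hbK⟩
    exact ⟨b, y, rfl, rfl,
      compl_deriv (.basic (compl_deriv (.app_x hbK)) (compl_deriv (.app_a hK)))⟩

theorem gdn_Xset : gdn (canModel A).I (Xset A C) = Eset A C := by
  ext o
  constructor
  · intro ho
    obtain ⟨b, y, hb, hy, hK⟩ := ho _ (xC_mem_X A hC)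
    injection hy with hy
    subst hy
    exact ⟨b, hb, hK⟩
  · rintro ⟨b, rfl, hbK⟩ x ⟨y, rfl, hyK⟩
    exact ⟨b, y, rfl, rfl,
      compl_deriv (.basic (compl_deriv (.app_x hbK)) (compl_deriv (.app_a hyK)))⟩

end Truth

theorem ci_eq (A : Finset Term) {C : Cpt} (hC : Occurs C (↑A : Set Term)) :
    ((canModel A).ci C).1 = Eset A C ∧ ((canModel A).ci C).2 = Xset A C := by
  induction C with
  | atom n =>
      refine ⟨rfl, ?_⟩
      exact gup_Eset A hC
  | meet C₁ C₂ ih₁ ih₂ =>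
      have hC₁ : Occurs C₁ (↑A : Set Term) :=
        occurs_of_subs hC (Finset.mem_insert_of_mem (Finset.mem_union_left _ (self_mem_subs C₁)))
      have hC₂ : Occurs C₂ (↑A : Set Term) :=
        occurs_of_subs hC (Finset.mem_insert_of_mem (Finset.mem_union_right _ (self_mem_subs C₂)))
      have h1 := ih₁ hC₁
      have h2 := ih₂ hC₂
      have hext : ((canModel A).ci (.meet C₁ C₂)).1 = Eset A (.meet C₁ C₂) := by
        show ((canModel A).ci C₁).1 ∩ ((canModel A).ci C₂).1 = _
        rw [h1.1, h2.1]
        ext o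
        constructor
        · rintro ⟨⟨b, rfl, hK1⟩, ho2⟩
          obtain ⟨b', hb', hK2⟩ := ho2
          injection hb' with hb'
          subst hb'
          have hm : Term.pos (.mem b.1 (.meet C₁ C₂)) ∈ Kc A :=
            compl_deriv (.andA_inv (compl_deriv (.app_x hK1)) (compl_deriv (.app_x hK2)) hC)
          exact ⟨b, rfl, compl_deriv (.basic hm (K_create_x A hC))⟩
        · rintro ⟨b, rfl, hK⟩
          have hm := compl_deriv (.app_x hK)
          refine ⟨⟨b, rfl, ?_⟩, ⟨b, rfl, ?_⟩⟩
          · exact compl_deriv (.basic (compl_deriv (.andA_l hm)) (K_create_x A hC₁))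
          · exact compl_deriv (.basic (compl_deriv (.andA_r hm)) (K_create_x A hC₂))
      refine ⟨hext, ?_⟩
      have hint : ((canModel A).ci (.meet C₁ C₂)).2
          = gup (canModel A).I (((canModel A).ci (.meet C₁ C₂)).1) := rfl
      rw [hint, hext]
      exact gup_Eset A hC
  | join C₁ C₂ ih₁ ih₂ =>
      have hC₁ : Occurs C₁ (↑A : Set Term) :=
        occurs_of_subs hC (Finset.mem_insert_of_mem (Finset.mem_union_left _ (self_mem_subs C₁)))
      have hC₂ : Occurs C₂ (↑A : Set Term) :=
        occurs_of_subs hC (Finset.mem_insert_of_mem (Finset.mem_union_right _ (self_mem_subs C₂)))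
      have h1 := ih₁ hC₁
      have h2 := ih₂ hC₂
      have hint : ((canModel A).ci (.join C₁ C₂)).2 = Xset A (.join C₁ C₂) := by
        show ((canModel A).ci C₁).2 ∩ ((canModel A).ci C₂).2 = _
        rw [h1.2, h2.2]
        ext x
        constructor
        · rintro ⟨⟨y, rfl, hK1⟩, hx2⟩
          obtain ⟨y', hy', hK2⟩ := hx2
          injection hy' with hy'
          subst hy'
          have hf : Term.pos (.fmem y.1 (.join C₁ C₂)) ∈ Kc A :=
            compl_deriv (.orX_inv (compl_deriv (.app_a hK1)) (compl_deriv (.app_a hK2)) hC)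
          exact ⟨y, rfl, compl_deriv (.basic (K_create_a A hC) hf)⟩
        · rintro ⟨y, rfl, hK⟩
          have hf := compl_deriv (.app_a hK)
          refine ⟨⟨y, rfl, ?_⟩, ⟨y, rfl, ?_⟩⟩
          · exact compl_deriv (.basic (K_create_a A hC₁) (compl_deriv (.orX_l hf)))
          · exact compl_deriv (.basic (K_create_a A hC₂) (compl_deriv (.orX_r hf)))
      have hext : ((canModel A).ci (.join C₁ C₂)).1
          = gdn (canModel A).I (((canModel A).ci (.join C₁ C₂)).2) := rfl
      refine ⟨?_, hint⟩
      rw [hext, hint]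
      exact gdn_Xset A hC
  | box C ih =>
      have hCC : Occurs C (↑A : Set Term) :=
        occurs_of_subs hC (Finset.mem_insert_of_mem (self_mem_subs C))
      have h := ih hCC
      have hext : ((canModel A).ci (.box C)).1 = Eset A (.box C) := by
        show gdn (canModel A).Rb (((canModel A).ci C).2) = _
        rw [h.2]
        ext o
        constructor
        · intro ho
          obtain ⟨b, y', rfl, hy', hK⟩ := ho _ (xC_mem_X A hCC)
          injection hy' with hy'
          subst hy'
          exact ⟨b, rfl, compl_deriv (.adj_box_r hK)⟩
        · rintro ⟨b, rfl, hK⟩ x ⟨y, rfl, hyK⟩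
          have hm := compl_deriv (.app_x hK)
          have hf := compl_deriv (.app_a hyK)
          exact ⟨b, y, rfl, rfl, compl_deriv (.boxR hm hf)⟩
      refine ⟨hext, ?_⟩
      have hint : ((canModel A).ci (.box C)).2
          = gup (canModel A).I (((canModel A).ci (.box C)).1) := rfl
      rw [hint, hext]
      exact gup_Eset A hC
  | dia C ih =>
      have hCC : Occurs C (↑A : Set Term) :=
        occurs_of_subs hC (Finset.mem_insert_of_mem (self_mem_subs C))
      have h := ih hCC
      have hint : ((canModel A).ci (.dia C)).2 = Xset A (.dia C) := by
        show gup (fun a x => (canModel A).Rd x a) (((canModel A).ci C).1) = _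
        rw [h.1]
        ext x
        constructor
        · intro hx
          obtain ⟨b, y, hb, rfl, hK⟩ := hx _ (aC_mem_E A hCC)
          injection hb with hb
          subst hb
          exact ⟨y, rfl, compl_deriv (.adj_dia_l hK)⟩
        · rintro ⟨y, rfl, hyK⟩ a ⟨b, rfl, hbK⟩
          have hf := compl_deriv (.app_a hyK)
          have hm := compl_deriv (.app_x hbK)
          exact ⟨b, y, rfl, rfl, compl_deriv (.diaR hf hm)⟩
      have hext : ((canModel A).ci (.dia C)).1
          = gdn (canModel A).I (((canModel A).ci (.dia C)).2) := rfl
      refine ⟨?_, hint⟩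
      rw [hext, hint]
      exact gdn_Xset A hC
/-! ### The canonical model satisfies a clash-free ABox -/

section CanSat

variable (A : Finset Term)

theorem can_oi {b : ObName} (h : ObOccurs b (Kc A)) :
    (canModel A).oi b = some ⟨b, h⟩ := dif_pos h

theorem can_oi_none {b : ObName} (h : ¬ ObOccurs b (Kc A)) :
    (canModel A).oi b = none := dif_neg h

theorem can_fi {y : FtName} (h : FtOccurs y (Kc A)) :
    (canModel A).fi y = some ⟨y, h⟩ := dif_pos h

theorem can_fi_none {y : FtName} (h : ¬ FtOccurs y (Kc A)) :
    (canModel A).fi y = none := dif_neg h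

theorem can_satAll (hno : ¬ HasClash (Kc A)) : (canModel A).SatAll ↑A := by
  intro t ht
  have htK : t ∈ Kc A := (compl_ruleClosed noExt ↑A).1 ht
  cases t with
  | pos p =>
      cases p with
      | rI b y =>
          have hob : ObOccurs b (Kc A) := ⟨_, htK, by simp [Term.objs, PTerm.objs]⟩
          have hfb : FtOccurs y (Kc A) := ⟨_, htK, by simp [Term.feats, PTerm.feats]⟩
          show (canModel A).I _ _
          rw [can_oi A hob, can_fi A hfb]
          exact ⟨_, _, rfl, rfl, htK⟩
      | rbox b y =>
          have hob : ObOccurs b (Kc A) := ⟨_, htK, by simp [Term.objs, PTerm.objs]⟩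
          have hfb : FtOccurs y (Kc A) := ⟨_, htK, by simp [Term.feats, PTerm.feats]⟩
          show (canModel A).Rb _ _
          rw [can_oi A hob, can_fi A hfb]
          exact ⟨_, _, rfl, rfl, htK⟩
      | rdia y b =>
          have hob : ObOccurs b (Kc A) := ⟨_, htK, by simp [Term.objs, PTerm.objs]⟩
          have hfb : FtOccurs y (Kc A) := ⟨_, htK, by simp [Term.feats, PTerm.feats]⟩
          show (canModel A).Rd _ _
          rw [can_oi A hob, can_fi A hfb]
          exact ⟨_, _, rfl, rfl, htK⟩
      | mem b C =>
          have hC : Occurs C (↑A : Set Term) := ⟨_, ht, self_mem_subs C⟩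
          have hK : Term.pos (.rI b (.cls C)) ∈ Kc A :=
            compl_deriv (.basic htK (K_create_x A hC))
          have hob : ObOccurs b (Kc A) := ⟨_, hK, by simp [Term.objs, PTerm.objs]⟩
          show (canModel A).oi b ∈ ((canModel A).ci C).1
          rw [(ci_eq A hC).1, can_oi A hob]
          exact ⟨⟨b, hob⟩, rfl, hK⟩
      | fmem y C =>
          have hC : Occurs C (↑A : Set Term) := ⟨_, ht, self_mem_subs C⟩
          have hK : Term.pos (.rI (.cls C) y) ∈ Kc A :=
            compl_deriv (.basic (K_create_a A hC) htK)
          have hfb : FtOccurs y (Kc A) := ⟨_, hK, by simp [Term.feats, PTerm.feats]⟩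
          show (canModel A).fi y ∈ ((canModel A).ci C).2
          rw [(ci_eq A hC).2, can_fi A hfb]
          exact ⟨⟨y, hfb⟩, rfl, hK⟩
  | neg p =>
      cases p with
      | rI b y =>
          rintro ⟨b', y', hb', hy', hK⟩
          rcases Classical.em (ObOccurs b (Kc A)) with h | h
          · rcases Classical.em (FtOccurs y (Kc A)) with h2 | h2
            · rw [can_oi A h] at hb'
              rw [can_fi A h2] at hy'
              injection hb' with hb'
              injection hy' with hy'
              subst hb'
              subst hy'
              exact hno ⟨.rI b y, trivial, hK, htK⟩
            · rw [can_fi_none A h2] at hy'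
              exact nomatch hy'
          · rw [can_oi_none A h] at hb'
            exact nomatch hb'
      | rbox b y =>
          rintro ⟨b', y', hb', hy', hK⟩
          rcases Classical.em (ObOccurs b (Kc A)) with h | h
          · rcases Classical.em (FtOccurs y (Kc A)) with h2 | h2
            · rw [can_oi A h] at hb'
              rw [can_fi A h2] at hy'
              injection hb' with hb'
              injection hy' with hy'
              subst hb'
              subst hy'
              exact hno ⟨.rbox b y, trivial, hK, htK⟩
            · rw [can_fi_none A h2] at hy'
              exact nomatch hy'
          · rw [can_oi_none A h] at hb'
            exact nomatch hb'
      | rdia y b =>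
          rintro ⟨b', y', hb', hy', hK⟩
          rcases Classical.em (ObOccurs b (Kc A)) with h | h
          · rcases Classical.em (FtOccurs y (Kc A)) with h2 | h2
            · rw [can_oi A h] at hb'
              rw [can_fi A h2] at hy'
              injection hb' with hb'
              injection hy' with hy'
              subst hb'
              subst hy'
              exact hno ⟨.rdia y b, trivial, hK, htK⟩
            · rw [can_fi_none A h2] at hy'
              exact nomatch hy'
          · rw [can_oi_none A h] at hb'
            exact nomatch hb'
      | mem b C =>
          have hC : Occurs C (↑A : Set Term) := ⟨_, ht, self_mem_subs C⟩
          intro hs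
          have hs' : (canModel A).oi b ∈ ((canModel A).ci C).1 := hs
          rw [(ci_eq A hC).1] at hs'
          obtain ⟨b', hb', hK⟩ := hs'
          rcases Classical.em (ObOccurs b (Kc A)) with h | h
          · rw [can_oi A h] at hb'
            injection hb' with hb'
            subst hb'
            exact hno ⟨.rI b (.cls C), trivial, hK, compl_deriv (.neg_b htK)⟩
          · rw [can_oi_none A h] at hb'
            exact nomatch hb'
      | fmem y C =>
          have hC : Occurs C (↑A : Set Term) := ⟨_, ht, self_mem_subs C⟩
          intro hs
          have hs' : (canModel A).fi y ∈ ((canModel A).ci C).2 := hs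
          rw [(ci_eq A hC).2] at hs'
          obtain ⟨y', hy', hK⟩ := hs'
          rcases Classical.em (FtOccurs y (Kc A)) with h | h
          · rw [can_fi A h] at hy'
            injection hy' with hy'
            subst hy'
            exact hno ⟨.rI (.cls C) y, trivial, hK, compl_deriv (.neg_x htK)⟩
          · rw [can_fi_none A h] at hy'
            exact nomatch hy'

end CanSat
/-- For any LE-ALC ABox `A`, the tableaux completion `Ā` of
`A` contains a clash if and only if `A` is inconsistent. -/
theorem clash_iff_inconsistent (A : Finset Term) (hwf : ABoxWF ↑A) :
    HasClash (Compl noExt ↑A) ↔ ¬ Consistent ↑A := by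
  constructor
  · exact fun hc => clash_sound hwf hc
  · intro hnc
    by_contra hcl
    exact hnc ⟨canModel A, can_good A, can_satAll A hcl⟩

end LEALC
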